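/- Let h = f/g with f, g ∈ ℤ[x], gcd(f,g) = 1, and suppose #f ≤ T, #g ≤ T (number of nonzero terms) and ‖f‖_∞ ≤ C, ‖g‖_∞ ≤ C. Let β ≥ 2TC² + 1 be an integer with g(β) ≠ 0. If f₁, g₁ ∈ ℤ[x] also satisfy ‖f₁‖_∞ ≤ C, ‖g₁‖_∞ ≤ C, #f₁ ≤ T, #g₁ ≤ T, g₁(β) ≠ 0, and f(β)·g₁(β) = f₁(β)·g(β), then f·g₁ = f₁·g as polynomials, hence f₁/g₁ = f/g as rational functions. -/

import Mathlib

open Polynomial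

lemma mul_coeff_bound' (f g : Polynomial ℤ) (T C : ℕ)
    (hT : f.support.card ≤ T)
    (hf : ∀ i, |f.coeff i| ≤ (C : ℤ)) (hg : ∀ i, |g.coeff i| ≤ (C : ℤ)) :
    ∀ n, |(f * g).coeff n| ≤ (T : ℤ) * C ^ 2 := by
  intro n
  rw [coeff_mul]
  have key : ∑ i ∈ Finset.range (n + 1), |f.coeff i| ≤ (T : ℤ) * C := by
    have h1 : ∑ i ∈ Finset.range (n + 1), |f.coeff i|
        = ∑ i ∈ (Finset.range (n + 1)).filter (fun i => f.coeff i ≠ 0), |f.coeff i| := by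
      rw [Finset.sum_filter_of_ne]
      intro i _ h
      exact fun hz => h (by simp [hz])
    have h2 : (Finset.range (n + 1)).filter (fun i => f.coeff i ≠ 0) ⊆ f.support := by
      intro i hi
      simp only [Finset.mem_filter] at hi
      exact mem_support_iff.mpr hi.2
    calc ∑ i ∈ Finset.range (n + 1), |f.coeff i|
        ≤ ∑ i ∈ f.support, |f.coeff i| := by
          rw [h1]
          exact Finset.sum_le_sum_of_subset_of_nonneg h2 (fun i _ _ => abs_nonneg _)
      _ ≤ f.support.card • (C : ℤ) := Finset.sum_le_card_nsmul _ _ _ (fun i _ => hf i)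
      _ ≤ (T : ℤ) * C := by
          rw [nsmul_eq_mul]
          exact mul_le_mul_of_nonneg_right (by exact_mod_cast hT) (by positivity)
  calc |∑ x ∈ Finset.HasAntidiagonal.antidiagonal n, f.coeff x.1 * g.coeff x.2|
      ≤ ∑ x ∈ Finset.HasAntidiagonal.antidiagonal n, |f.coeff x.1 * g.coeff x.2| :=
        Finset.abs_sum_le_sum_abs _ _
    _ ≤ ∑ x ∈ Finset.HasAntidiagonal.antidiagonal n, |f.coeff x.1| * C := by
        apply Finset.sum_le_sum
        intro x _
        rw [abs_mul]
        exact mul_le_mul_of_nonneg_left (hg x.2) (abs_nonneg _)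
    _ = (∑ i ∈ Finset.range (n + 1), |f.coeff i|) * C := by
        rw [Finset.sum_mul,
          Finset.Nat.sum_antidiagonal_eq_sum_range_succ (fun i j => |f.coeff i| * (C : ℤ))]
    _ ≤ ((T : ℤ) * C) * C := mul_le_mul_of_nonneg_right key (by positivity)
    _ = (T : ℤ) * C ^ 2 := by ring

lemma eval_zero_imp' (B β : ℤ) (hB : 0 ≤ B) (hβ : B + 1 ≤ β) :
    ∀ n (p : Polynomial ℤ), p.natDegree ≤ n → (∀ i, |p.coeff i| ≤ B) →
      p.eval β = 0 → p = 0 := by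
  intro n
  induction n with
  | zero =>
    intro p hd hc he
    rw [Polynomial.eq_C_of_natDegree_le_zero hd] at he ⊢
    simp only [eval_C] at he
    simp [he]
  | succ n ih =>
    intro p hd hc he
    have hβ0 : 0 < β := by linarith
    have h1 : p.divX * X + C (p.coeff 0) = p := divX_mul_X_add p
    have he2 : p.divX.eval β * β + p.coeff 0 = 0 := by
      have := congrArg (eval β) h1
      simpa using this.trans he
    have hc0 : p.coeff 0 = 0 := by
      by_contra h
      have hdvd : β ∣ p.coeff 0 := ⟨-(p.divX.eval β), by linarith⟩
      have hle : β ≤ |p.coeff 0| := Int.le_of_dvd (abs_pos.mpr h) ((dvd_abs β _).mpr hdvd)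
      linarith [hc 0]
    have he3 : p.divX.eval β = 0 := by
      have : p.divX.eval β * β = 0 := by linarith
      exact (mul_eq_zero.mp this).resolve_right hβ0.ne'
    have hdeg : p.divX.natDegree ≤ n := by
      have := Polynomial.natDegree_divX_eq_natDegree_tsub_one (p := p)
      omega
    have hcd : ∀ i, |p.divX.coeff i| ≤ B := by
      intro i
      rw [coeff_divX]
      exact hc (i + 1)
    have hdz : p.divX = 0 := ih p.divX hdeg hcd he3
    rw [← h1, hdz, hc0]
    simp

theorem stmt6 (f g f₁ g₁ : Polynomial ℤ) (T C : ℕ) (β : ℤ)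
    (hcop : IsRelPrime f g)
    (hTf : f.support.card ≤ T) (hTg : g.support.card ≤ T)
    (hTf₁ : f₁.support.card ≤ T) (hTg₁ : g₁.support.card ≤ T)
    (hfC : ∀ i, |f.coeff i| ≤ (C : ℤ)) (hgC : ∀ i, |g.coeff i| ≤ (C : ℤ))
    (hf₁C : ∀ i, |f₁.coeff i| ≤ (C : ℤ)) (hg₁C : ∀ i, |g₁.coeff i| ≤ (C : ℤ))
    (hβ : β ≥ 2 * T * C ^ 2 + 1)
    (hgβ : g.eval β ≠ 0) (hg₁β : g₁.eval β ≠ 0)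
    (heq : f.eval β * g₁.eval β = f₁.eval β * g.eval β) :
    f * g₁ = f₁ * g := by
  set p := f * g₁ - f₁ * g with hp
  have hcoeff : ∀ i, |p.coeff i| ≤ 2 * (T : ℤ) * C ^ 2 := by
    intro i
    have h1 := mul_coeff_bound' f g₁ T C hTf hfC hg₁C i
    have h2 := mul_coeff_bound' f₁ g T C hTf₁ hf₁C hgC i
    have : |p.coeff i| ≤ |(f * g₁).coeff i| + |(f₁ * g).coeff i| := by
      rw [hp, coeff_sub]
      exact abs_sub _ _
    linarith
  have heval : p.eval β = 0 := by
    simp only [hp, eval_sub, eval_mul]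
    linarith
  have hz : p = 0 := eval_zero_imp' (2 * (T : ℤ) * C ^ 2) β (by positivity)
    (by push_cast at hβ ⊢; linarith) p.natDegree p le_rfl hcoeff heval
  have := sub_eq_zero.mp hz
  exact this
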